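/- Let M ≥ 1 be a natural number and let η > 0, Δ > 0, λ > 0, α > 0, ν ∈ ℝ and 0 ≤ R_C < R_B be real numbers. Define the probability density f(r) = 2Δλ r e^{−Δλ(r² − R_C²)}/(1 − e^{−Δλ(R_B² − R_C²)}) on (R_C, R_B). Then (1/(2Δ)) ∫_{ν−Δ}^{ν+Δ} ∫_{R_C}^{R_B} (η(1+r^α)/M) · (1 + π² M² (ν−θ)²/12) · f(r) dr dθ = (η λ/(M(1 − e^{−Δλ(R_B² − R_C²)}))) · (2Δ + π² M² Δ³/18) · e^{Δλ R_C²} · ( (e^{−Δλ R_C²} − e^{−Δλ R_B²})/(2Δλ) + ((Δλ)^{−(α+2)/2}/2) · (γ(α/2 + 1, Δλ R_B²) − γ(α/2 + 1, Δλ R_C²)) ), where γ(s, x) = ∫_0^x t^{s−1} e^{−t} dt is the lower incomplete gamma function. -/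

import Mathlib

open Real intervalIntegral

private lemma theta_int' (ν Δ k : ℝ) :
    (∫ θ in (ν - Δ)..(ν + Δ), (1 + k * (ν - θ) ^ 2)) =
      2 * Δ + k * (2 * Δ ^ 3 / 3) := by
  have h1 : ∀ θ : ℝ, 1 + k * (ν - θ) ^ 2 = (fun u => 1 + k * u ^ 2) (θ - ν) := by
    intro θ; ring_nf
  simp_rw [h1]
  rw [intervalIntegral.integral_comp_sub_right (fun u => 1 + k * u ^ 2) ν,
    show ν - Δ - ν = -Δ by ring, show ν + Δ - ν = Δ by ring]
  rw [intervalIntegral.integral_add intervalIntegrable_const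
    ((show Continuous fun u : ℝ => k * u ^ 2 from continuous_const.mul (continuous_pow 2)).intervalIntegrable _ _),
    intervalIntegral.integral_const, intervalIntegral.integral_const_mul,
    integral_pow]
  simp; ring

private lemma J1_int' (c RC RB : ℝ) :
    (∫ r in RC..RB, 2 * c * r * Real.exp (-(c * r ^ 2))) =
      Real.exp (-(c * RC ^ 2)) - Real.exp (-(c * RB ^ 2)) := by
  have h : ∀ x ∈ Set.uIcc RC RB,
      HasDerivAt (fun r => -Real.exp (-(c * r ^ 2)))
        (2 * c * x * Real.exp (-(c * x ^ 2))) x := by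
    intro x _
    have h1 : HasDerivAt (fun r : ℝ => -(c * r ^ 2)) (-(c * (2 * x))) x := by
      exact ((hasDerivAt_pow 2 x).const_mul c).neg.congr_deriv (by norm_num)
    have h2 := h1.exp.neg
    exact h2.congr_deriv (by ring)
  rw [intervalIntegral.integral_eq_sub_of_hasDerivAt h
    (((((continuous_const.mul continuous_id).mul
      ((continuous_const.mul (continuous_pow 2)).neg.rexp))).intervalIntegrable _ _))]
  ring

private lemma J2_int' (c RC RB α : ℝ) (hc : 0 < c) (hα : 0 < α) (hRC : 0 ≤ RC) (hR : RC < RB) :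
    (∫ r in RC..RB, r ^ α * (2 * c * r * Real.exp (-(c * r ^ 2)))) =
      c ^ (-(α / 2)) *
        ((∫ t in (0:ℝ)..(c * RB ^ 2), t ^ (α / 2) * Real.exp (-t)) -
          ∫ t in (0:ℝ)..(c * RC ^ 2), t ^ (α / 2) * Real.exp (-t)) := by
  have hcont2 : Continuous fun t : ℝ => t ^ (α / 2) := by
    rw [continuous_iff_continuousAt]
    intro x
    exact Real.continuousAt_rpow_const x (α / 2) (Or.inr (by positivity))
  have hg : Continuous fun t : ℝ => c ^ (-(α / 2)) * (t ^ (α / 2) * Real.exp (-t)) :=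
    continuous_const.mul (hcont2.mul (continuous_neg.rexp))
  have hsub : (∫ r in RC..RB, (2 * c * r) • ((fun t : ℝ => c ^ (-(α / 2)) * (t ^ (α / 2) * Real.exp (-t))) (c * r ^ 2)))
      = ∫ t in (c * RC ^ 2)..(c * RB ^ 2), c ^ (-(α / 2)) * (t ^ (α / 2) * Real.exp (-t)) := by
    have h1 : ∀ x ∈ Set.uIcc RC RB, HasDerivAt (fun r : ℝ => c * r ^ 2) (2 * c * x) x := by
      intro x _
      have h1 := (hasDerivAt_pow 2 x).const_mul c
      exact h1.congr_deriv (by norm_num; ring)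
    have := intervalIntegral.integral_comp_smul_deriv h1
      ((continuous_const.mul continuous_id).continuousOn) hg
    simpa [Function.comp] using this
  have heq : Set.EqOn (fun r => r ^ α * (2 * c * r * Real.exp (-(c * r ^ 2))))
      (fun r => (2 * c * r) • ((fun t : ℝ => c ^ (-(α / 2)) * (t ^ (α / 2) * Real.exp (-t))) (c * r ^ 2)))
      (Set.uIcc RC RB) := by
    intro r hr
    rw [Set.uIcc_of_le hR.le] at hr
    have hr0 : 0 ≤ r := le_trans hRC hr.1
    have key : c ^ (-(α / 2)) * (c * r ^ 2) ^ (α / 2) = r ^ α := by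
      rw [Real.mul_rpow hc.le (sq_nonneg r), ← Real.rpow_natCast r 2,
        ← Real.rpow_mul hr0, ← mul_assoc, ← Real.rpow_add hc]
      norm_num
      congr 1
      ring
    simp only [smul_eq_mul]
    calc (fun r => r ^ α * (2 * c * r * Real.exp (-(c * r ^ 2)))) r
        = (c ^ (-(α / 2)) * (c * r ^ 2) ^ (α / 2)) * (2 * c * r * Real.exp (-(c * r ^ 2))) := by rw [key]
      _ = 2 * c * r * (c ^ (-(α / 2)) * ((c * r ^ 2) ^ (α / 2) * Real.exp (-(c * r ^ 2)))) := by ring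
  rw [intervalIntegral.integral_congr heq, hsub,
    intervalIntegral.integral_const_mul]
  congr 1
  have hint : ∀ a b : ℝ, IntervalIntegrable (fun t : ℝ => t ^ (α / 2) * Real.exp (-t)) MeasureTheory.volume a b := by
    intro a b
    exact (hcont2.mul continuous_neg.rexp).intervalIntegrable _ _
  rw [← intervalIntegral.integral_interval_sub_left (hint 0 (c * RB ^ 2)) (hint 0 (c * RC ^ 2))]

theorem nnnf_far_integral (M : ℕ) (hM : 1 ≤ M) (η Δ lam α ν RC RB : ℝ)
    (hη : 0 < η) (hΔ : 0 < Δ) (hlam : 0 < lam) (hα : 0 < α)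
    (hRC : 0 ≤ RC) (hR : RC < RB)
    (f : ℝ → ℝ)
    (hf : ∀ r : ℝ, f r = 2 * Δ * lam * r * Real.exp (-(Δ * lam * (r ^ 2 - RC ^ 2))) /
        (1 - Real.exp (-(Δ * lam * (RB ^ 2 - RC ^ 2))))) :
    (1 / (2 * Δ)) *
      ∫ θ in (ν - Δ)..(ν + Δ), ∫ r in RC..RB,
        (η * (1 + r ^ α) / M) * (1 + π ^ 2 * (M : ℝ) ^ 2 * (ν - θ) ^ 2 / 12) * f r =
      (η * lam / (M * (1 - Real.exp (-(Δ * lam * (RB ^ 2 - RC ^ 2)))))) *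
        (2 * Δ + π ^ 2 * (M : ℝ) ^ 2 * Δ ^ 3 / 18) *
        (Real.exp (Δ * lam * RC ^ 2) *
          ((Real.exp (-(Δ * lam * RC ^ 2)) - Real.exp (-(Δ * lam * RB ^ 2))) / (2 * Δ * lam) +
            ((Δ * lam) ^ (-(α + 2) / 2) / 2) *
              ((∫ t in (0 : ℝ)..(Δ * lam * RB ^ 2), t ^ (α / 2 + 1 - 1) * Real.exp (-t)) -
                ∫ t in (0 : ℝ)..(Δ * lam * RC ^ 2), t ^ (α / 2 + 1 - 1) * Real.exp (-t)))) := by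
  have hM0 : (0:ℝ) < M := by exact_mod_cast hM
  have hc : 0 < Δ * lam := mul_pos hΔ hlam
  have hsq : RC ^ 2 < RB ^ 2 := by nlinarith
  have hD : 0 < 1 - Real.exp (-(Δ * lam * (RB ^ 2 - RC ^ 2))) := by
    have h1 : Real.exp (-(Δ * lam * (RB ^ 2 - RC ^ 2))) < 1 := by
      rw [Real.exp_lt_one_iff]
      nlinarith
    linarith
  -- continuity facts
  have hra : Continuous fun r : ℝ => r ^ α := by
    rw [continuous_iff_continuousAt]
    intro x
    exact Real.continuousAt_rpow_const x α (Or.inr hα.le)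
  have hXc : Continuous fun r : ℝ => 2 * (Δ * lam) * r * Real.exp (-(Δ * lam * r ^ 2)) :=
    (continuous_const.mul continuous_id).mul
      ((continuous_const.mul (continuous_pow 2)).neg.rexp)
  -- pointwise rewriting of the integrand
  have key : ∀ θ r : ℝ,
      (η * (1 + r ^ α) / M) * (1 + π ^ 2 * (M : ℝ) ^ 2 * (ν - θ) ^ 2 / 12) * f r =
        (η * Real.exp (Δ * lam * RC ^ 2) /
            (M * (1 - Real.exp (-(Δ * lam * (RB ^ 2 - RC ^ 2)))))) *
          ((1 + π ^ 2 * (M : ℝ) ^ 2 / 12 * (ν - θ) ^ 2) *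
            ((1 + r ^ α) * (2 * (Δ * lam) * r * Real.exp (-(Δ * lam * r ^ 2))))) := by
    intro θ r
    have hex : Real.exp (-(Δ * lam * (r ^ 2 - RC ^ 2))) =
        Real.exp (Δ * lam * RC ^ 2) * Real.exp (-(Δ * lam * r ^ 2)) := by
      rw [← Real.exp_add]; congr 1; ring
    rw [hf r, hex]
    field_simp
  simp_rw [show α / 2 + 1 - 1 = α / 2 from by ring, key,
    intervalIntegral.integral_const_mul, intervalIntegral.integral_mul_const]
  rw [theta_int' ν Δ (π ^ 2 * (M : ℝ) ^ 2 / 12)]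
  -- compute the radial integral
  have hsplit : (∫ r in RC..RB,
      (1 + r ^ α) * (2 * (Δ * lam) * r * Real.exp (-(Δ * lam * r ^ 2)))) =
      (∫ r in RC..RB, 2 * (Δ * lam) * r * Real.exp (-(Δ * lam * r ^ 2))) +
      ∫ r in RC..RB, r ^ α * (2 * (Δ * lam) * r * Real.exp (-(Δ * lam * r ^ 2))) := by
    rw [← intervalIntegral.integral_add (hXc.intervalIntegrable _ _)
      ((show Continuous fun r : ℝ => r ^ α * (2 * (Δ * lam) * r * Real.exp (-(Δ * lam * r ^ 2))) from hra.mul hXc).intervalIntegrable _ _)]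
    apply intervalIntegral.integral_congr
    intro r _
    ring
  rw [hsplit, J1_int' (Δ * lam) RC RB, J2_int' (Δ * lam) RC RB α hc hα hRC hR]
  have hpow : (Δ * lam) ^ (-(α + 2) / 2) = (Δ * lam) ^ (-(α / 2)) * (Δ * lam)⁻¹ := by
    rw [show -(α + 2) / 2 = -(α / 2) + (-1) by ring, Real.rpow_add hc, Real.rpow_neg_one]
  rw [hpow]
  field_simp
  ring
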